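/- Let g = u₁^{ℓ−1}·γ(u) with γ smooth and ℓ an integer. Then ∂·δ_u(u·g) − (1/2)·u₁·δ_u g = −(ℓ−2)·∂( (ℓ−1)·u₂·u₁^{ℓ−3}·u·γ(u) + u₁^{ℓ−1}·( u·γ'(u) + (1/2)·γ(u) ) ), as an identity of differential polynomials (with u₁ invertible when ℓ < 3). -/

import Mathlib

/-- Partial derivative `∂/∂u_k` of an observable on the jet space
(coordinates `z 0 = u`, `z k = u_k`). -/
noncomputable def pd (k : ℕ) (F : (ℕ → ℝ) → ℝ) : (ℕ → ℝ) → ℝ :=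
  fun z => deriv (fun s => F (Function.update z k s)) (z k)

/-- The total derivative `∂ = Σ_{j≥0} u_{j+1} ∂/∂u_j`. -/
noncomputable def TD (F : (ℕ → ℝ) → ℝ) : (ℕ → ℝ) → ℝ :=
  fun z => ∑ᶠ j : ℕ, z (j + 1) * pd j F z

/-- The variational derivative `δ_u = Σ_{k≥0} (−∂)^k ∘ ∂/∂u_k`. -/
noncomputable def VD (F : (ℕ → ℝ) → ℝ) : (ℕ → ℝ) → ℝ :=
  fun z => ∑ᶠ k : ℕ, (-1 : ℝ) ^ k * (TD^[k] (pd k F)) z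

private lemma finsum_nat4 (f : ℕ → ℝ) (h : ∀ n, 4 ≤ n → f n = 0) :
    ∑ᶠ n, f n = f 0 + f 1 + f 2 + f 3 := by
  have hs : Function.support f ⊆ (Finset.range 4 : Finset ℕ) := by
    intro x hx
    simp only [Function.mem_support] at hx
    simp only [Finset.coe_range, Set.mem_Iio]
    by_contra hc
    exact hx (h x (by omega))
  rw [finsum_eq_sum_of_support_subset f hs]
  simp [Finset.sum_range_succ]

private lemma TD_iter_zero (n : ℕ) : TD^[n] (fun _ => (0:ℝ)) = fun _ => 0 := by
  induction n with
  | zero => simp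
  | succ n ih =>
    rw [Function.iterate_succ_apply', ih]
    funext z
    simp [TD, pd]

private lemma pd_indep (F : (ℕ → ℝ) → ℝ) (k : ℕ)
    (h : ∀ w s, F (Function.update w k s) = F w) : pd k F = fun _ => 0 := by
  funext z
  unfold pd
  simp only [h]
  simp

private lemma TD_of (F : (ℕ → ℝ) → ℝ) (z : ℕ → ℝ) (h : ∀ j, 3 ≤ j → pd j F z = 0) :
    TD F z = z 1 * pd 0 F z + z 2 * pd 1 F z + z 3 * pd 2 F z := by
  unfold TD
  rw [finsum_nat4 _ (fun n hn => by rw [h n (by omega), mul_zero])]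
  rw [h 3 (by norm_num)]
  ring

private lemma VD_of (F : (ℕ → ℝ) → ℝ) (h : ∀ k, 2 ≤ k → pd k F = fun _ => 0) (z : ℕ → ℝ) :
    VD F z = pd 0 F z - TD (pd 1 F) z := by
  unfold VD
  rw [finsum_nat4 _ (fun n hn => by rw [h n (by omega), TD_iter_zero n]; simp)]
  rw [h 2 (by norm_num), h 3 (by norm_num), TD_iter_zero 2, TD_iter_zero 3]
  simp [sub_eq_add_neg]

/-! Concrete functions. -/

private noncomputable def Ffun (γ : ℝ → ℝ) (ℓ : ℤ) : (ℕ → ℝ) → ℝ :=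
  fun w => w 0 * (w 1 ^ (ℓ - 1) * γ (w 0))

private noncomputable def Gfun (γ : ℝ → ℝ) (ℓ : ℤ) : (ℕ → ℝ) → ℝ :=
  fun w => w 1 ^ (ℓ - 1) * γ (w 0)

private noncomputable def Rfun (γ : ℝ → ℝ) (ℓ : ℤ) : (ℕ → ℝ) → ℝ :=
  fun w => ((ℓ : ℝ) - 1) * w 2 * w 1 ^ (ℓ - 3) * w 0 * γ (w 0)
    + w 1 ^ (ℓ - 1) * (w 0 * deriv γ (w 0) + (1 / 2) * γ (w 0))

/-- `pd 1` of `Ffun`. -/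
private noncomputable def Pfun (γ : ℝ → ℝ) (ℓ : ℤ) : (ℕ → ℝ) → ℝ :=
  fun w => w 0 * (((ℓ - 1 : ℤ) : ℝ) * w 1 ^ (ℓ - 1 - 1) * γ (w 0))

/-- `pd 1` of `Gfun`. -/
private noncomputable def Kfun (γ : ℝ → ℝ) (ℓ : ℤ) : (ℕ → ℝ) → ℝ :=
  fun w => ((ℓ - 1 : ℤ) : ℝ) * w 1 ^ (ℓ - 1 - 1) * γ (w 0)

/-- `VD` of `Ffun`. -/
private noncomputable def Hfun (γ : ℝ → ℝ) (ℓ : ℤ) : (ℕ → ℝ) → ℝ := fun w =>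
  (w 1 ^ (ℓ - 1) * γ (w 0) + w 0 * (w 1 ^ (ℓ - 1) * deriv γ (w 0)))
  - (w 1 * (((ℓ - 1 : ℤ) : ℝ) * w 1 ^ (ℓ - 1 - 1) * γ (w 0)
        + w 0 * (((ℓ - 1 : ℤ) : ℝ) * w 1 ^ (ℓ - 1 - 1) * deriv γ (w 0)))
     + w 2 * (w 0 * (((ℓ - 1 : ℤ) : ℝ) * (((ℓ - 1 - 1 : ℤ) : ℝ) * w 1 ^ (ℓ - 1 - 1 - 1)) * γ (w 0)))
     + w 3 * 0)

section Lemmas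

variable (γ : ℝ → ℝ) (ℓ : ℤ)

/-! Independence (vanishing `pd`) lemmas. -/

private lemma pdF_hi (k : ℕ) (hk : 2 ≤ k) : pd k (Ffun γ ℓ) = fun _ => 0 :=
  pd_indep _ _ fun w s => by
    simp [Ffun, Function.update_apply, show (0:ℕ) ≠ k by omega, show (1:ℕ) ≠ k by omega]

private lemma pdG_hi (k : ℕ) (hk : 2 ≤ k) : pd k (Gfun γ ℓ) = fun _ => 0 :=
  pd_indep _ _ fun w s => by
    simp [Gfun, Function.update_apply, show (0:ℕ) ≠ k by omega, show (1:ℕ) ≠ k by omega]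

private lemma pdP_hi (k : ℕ) (hk : 2 ≤ k) : pd k (Pfun γ ℓ) = fun _ => 0 :=
  pd_indep _ _ fun w s => by
    simp [Pfun, Function.update_apply, show (0:ℕ) ≠ k by omega, show (1:ℕ) ≠ k by omega]

private lemma pdK_hi (k : ℕ) (hk : 2 ≤ k) : pd k (Kfun γ ℓ) = fun _ => 0 :=
  pd_indep _ _ fun w s => by
    simp [Kfun, Function.update_apply, show (0:ℕ) ≠ k by omega, show (1:ℕ) ≠ k by omega]

private lemma pdH_hi (k : ℕ) (hk : 3 ≤ k) : pd k (Hfun γ ℓ) = fun _ => 0 :=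
  pd_indep _ _ fun w s => by
    simp [Hfun, Function.update_apply, show (0:ℕ) ≠ k by omega, show (1:ℕ) ≠ k by omega,
      show (2:ℕ) ≠ k by omega]

private lemma pdR_hi (k : ℕ) (hk : 3 ≤ k) : pd k (Rfun γ ℓ) = fun _ => 0 :=
  pd_indep _ _ fun w s => by
    simp [Rfun, Function.update_apply, show (0:ℕ) ≠ k by omega, show (1:ℕ) ≠ k by omega,
      show (2:ℕ) ≠ k by omega]

/-! `pd 1` computations (unconditional, via field/zpow deriv lemmas). -/

private lemma pd1F : pd 1 (Ffun γ ℓ) = Pfun γ ℓ := by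
  funext w
  unfold pd
  have key : (fun s => Ffun γ ℓ (Function.update w 1 s))
      = fun s => s ^ (ℓ - 1) * (γ (w 0)) * (w 0) := by
    funext s
    simp [Ffun, Function.update_apply]
    ring
  rw [key, deriv_mul_const_field, deriv_mul_const_field, deriv_zpow]
  simp only [Pfun]
  ring

private lemma pd1G : pd 1 (Gfun γ ℓ) = Kfun γ ℓ := by
  funext w
  unfold pd
  have key : (fun s => Gfun γ ℓ (Function.update w 1 s))
      = fun s => s ^ (ℓ - 1) * γ (w 0) := by
    funext s
    simp [Gfun, Function.update_apply]
  rw [key, deriv_mul_const_field, deriv_zpow]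
  simp only [Kfun]

private lemma pd1P (w : ℕ → ℝ) :
    pd 1 (Pfun γ ℓ) w
      = w 0 * (((ℓ - 1 : ℤ) : ℝ) * (((ℓ - 1 - 1 : ℤ) : ℝ) * w 1 ^ (ℓ - 1 - 1 - 1)) * γ (w 0)) := by
  unfold pd
  have key : (fun s => Pfun γ ℓ (Function.update w 1 s))
      = fun s => w 0 * (((ℓ - 1 : ℤ) : ℝ) * s ^ (ℓ - 1 - 1) * γ (w 0)) := by
    funext s
    simp [Pfun, Function.update_apply]
  rw [key, deriv_const_mul_field, deriv_mul_const_field, deriv_const_mul_field, deriv_zpow]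

/-! `pd 0` computations (need differentiability of `γ`). -/

private lemma pd0F (hγ1 : ∀ x, HasDerivAt γ (deriv γ x) x) (w : ℕ → ℝ) :
    pd 0 (Ffun γ ℓ) w = w 1 ^ (ℓ - 1) * γ (w 0) + w 0 * (w 1 ^ (ℓ - 1) * deriv γ (w 0)) := by
  unfold pd
  have key : (fun s => Ffun γ ℓ (Function.update w 0 s))
      = fun s => s * (w 1 ^ (ℓ - 1) * γ s) := by
    funext s
    simp [Ffun, Function.update_apply]
  rw [key]
  have t := (hasDerivAt_id (w 0)).mul ((hγ1 (w 0)).const_mul (w 1 ^ (ℓ - 1)))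
  simp only [id_eq] at t; exact t.deriv.trans (by ring)

private lemma pd0G (hγ1 : ∀ x, HasDerivAt γ (deriv γ x) x) (w : ℕ → ℝ) :
    pd 0 (Gfun γ ℓ) w = w 1 ^ (ℓ - 1) * deriv γ (w 0) := by
  unfold pd
  have key : (fun s => Gfun γ ℓ (Function.update w 0 s))
      = fun s => w 1 ^ (ℓ - 1) * γ s := by
    funext s
    simp [Gfun, Function.update_apply]
  rw [key]
  exact ((hγ1 (w 0)).const_mul (w 1 ^ (ℓ - 1))).deriv

private lemma pd0P (hγ1 : ∀ x, HasDerivAt γ (deriv γ x) x) (w : ℕ → ℝ) :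
    pd 0 (Pfun γ ℓ) w
      = ((ℓ - 1 : ℤ) : ℝ) * w 1 ^ (ℓ - 1 - 1) * γ (w 0)
        + w 0 * (((ℓ - 1 : ℤ) : ℝ) * w 1 ^ (ℓ - 1 - 1) * deriv γ (w 0)) := by
  unfold pd
  have key : (fun s => Pfun γ ℓ (Function.update w 0 s))
      = fun s => s * (((ℓ - 1 : ℤ) : ℝ) * w 1 ^ (ℓ - 1 - 1) * γ s) := by
    funext s
    simp [Pfun, Function.update_apply]
  rw [key]
  have t := (hasDerivAt_id (w 0)).mul
    ((hγ1 (w 0)).const_mul (((ℓ - 1 : ℤ) : ℝ) * w 1 ^ (ℓ - 1 - 1)))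
  simp only [id_eq] at t; exact t.deriv.trans (by ring)

private lemma pd0K (hγ1 : ∀ x, HasDerivAt γ (deriv γ x) x) (w : ℕ → ℝ) :
    pd 0 (Kfun γ ℓ) w = ((ℓ - 1 : ℤ) : ℝ) * w 1 ^ (ℓ - 1 - 1) * deriv γ (w 0) := by
  unfold pd
  have key : (fun s => Kfun γ ℓ (Function.update w 0 s))
      = fun s => ((ℓ - 1 : ℤ) : ℝ) * w 1 ^ (ℓ - 1 - 1) * γ s := by
    funext s
    simp [Kfun, Function.update_apply]
  rw [key]
  have t := (hγ1 (w 0)).const_mul (((ℓ - 1 : ℤ) : ℝ) * w 1 ^ (ℓ - 1 - 1))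
  exact t.deriv.trans (by ring)

private lemma pd1K (w : ℕ → ℝ) :
    pd 1 (Kfun γ ℓ) w
      = ((ℓ - 1 : ℤ) : ℝ) * (((ℓ - 1 - 1 : ℤ) : ℝ) * w 1 ^ (ℓ - 1 - 1 - 1)) * γ (w 0) := by
  unfold pd
  have key : (fun s => Kfun γ ℓ (Function.update w 1 s))
      = fun s => ((ℓ - 1 : ℤ) : ℝ) * s ^ (ℓ - 1 - 1) * γ (w 0) := by
    funext s
    simp [Kfun, Function.update_apply]
  rw [key, deriv_mul_const_field, deriv_const_mul_field, deriv_zpow]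

/-- `TD` of `Pfun`, for all points. -/
private lemma TDP (hγ1 : ∀ x, HasDerivAt γ (deriv γ x) x) (w : ℕ → ℝ) :
    TD (Pfun γ ℓ) w
      = w 1 * (((ℓ - 1 : ℤ) : ℝ) * w 1 ^ (ℓ - 1 - 1) * γ (w 0)
          + w 0 * (((ℓ - 1 : ℤ) : ℝ) * w 1 ^ (ℓ - 1 - 1) * deriv γ (w 0)))
        + w 2 * (w 0 * (((ℓ - 1 : ℤ) : ℝ)
            * (((ℓ - 1 - 1 : ℤ) : ℝ) * w 1 ^ (ℓ - 1 - 1 - 1)) * γ (w 0)))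
        + w 3 * 0 := by
  rw [TD_of _ _ (fun j hj => by rw [pdP_hi γ ℓ j (by omega)])]
  rw [pd0P γ ℓ hγ1, pd1P, pdP_hi γ ℓ 2 le_rfl]

/-- `VD (Ffun) = Hfun`. -/
private lemma VDF (hγ1 : ∀ x, HasDerivAt γ (deriv γ x) x) : VD (Ffun γ ℓ) = Hfun γ ℓ := by
  funext w
  rw [VD_of _ (fun k hk => pdF_hi γ ℓ k hk) w, pd1F, TDP γ ℓ hγ1, pd0F γ ℓ hγ1]
  simp only [Hfun]

end Lemmas

theorem totD_varD_ug_identity (γ : ℝ → ℝ) (hγ : ContDiff ℝ (⊤ : ℕ∞) γ) (ℓ : ℤ) :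
    ∀ z : ℕ → ℝ, z 1 ≠ 0 →
      TD (VD (fun w => w 0 * (w 1 ^ (ℓ - 1) * γ (w 0)))) z
          - (1 / 2) * z 1 * VD (fun w => w 1 ^ (ℓ - 1) * γ (w 0)) z
        = -((ℓ : ℝ) - 2) *
            TD (fun w => ((ℓ : ℝ) - 1) * w 2 * w 1 ^ (ℓ - 3) * w 0 * γ (w 0)
              + w 1 ^ (ℓ - 1) * (w 0 * deriv γ (w 0) + (1 / 2) * γ (w 0))) z := by
  intro z hb
  have hdiff := contDiff_infty_iff_deriv.mp hγ
  have hdiff2 := contDiff_infty_iff_deriv.mp hdiff.2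
  have hγ1 : ∀ x, HasDerivAt γ (deriv γ x) x := fun x => (hdiff.1 x).hasDerivAt
  have hγ2 : ∀ x, HasDerivAt (deriv γ) (deriv (deriv γ) x) x := fun x => (hdiff2.1 x).hasDerivAt
  show TD (VD (Ffun γ ℓ)) z - (1 / 2) * z 1 * VD (Gfun γ ℓ) z = -((ℓ:ℝ) - 2) * TD (Rfun γ ℓ) z
  -- pd of Hfun at z
  have pd0H : pd 0 (Hfun γ ℓ) z
      = ((z 1) ^ (ℓ-1) * deriv γ (z 0) + ((z 1) ^ (ℓ-1) * deriv γ (z 0) + (z 0) * ((z 1) ^ (ℓ-1) * deriv (deriv γ) (z 0))))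
        - ((z 1) * ((((ℓ-1:ℤ):ℝ) * (z 1) ^ (ℓ-1-1)) * deriv γ (z 0)
              + ((((ℓ-1:ℤ):ℝ) * (z 1) ^ (ℓ-1-1)) * deriv γ (z 0)
                  + (z 0) * ((((ℓ-1:ℤ):ℝ) * (z 1) ^ (ℓ-1-1)) * deriv (deriv γ) (z 0))))
           + (z 2) * ((((ℓ-1:ℤ):ℝ) * (((ℓ-1-1:ℤ):ℝ) * (z 1) ^ (ℓ-1-1-1))) * γ (z 0)
              + (z 0) * ((((ℓ-1:ℤ):ℝ) * (((ℓ-1-1:ℤ):ℝ) * (z 1) ^ (ℓ-1-1-1))) * deriv γ (z 0)))) := by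
    unfold pd
    have key : (fun s => Hfun γ ℓ (Function.update z 0 s))
        = fun s =>
          ((z 1) ^ (ℓ-1) * γ s + s * ((z 1) ^ (ℓ-1) * deriv γ s))
          - ((z 1) * (((ℓ-1:ℤ):ℝ) * (z 1) ^ (ℓ-1-1) * γ s
                + s * (((ℓ-1:ℤ):ℝ) * (z 1) ^ (ℓ-1-1) * deriv γ s))
             + (z 2) * (s * (((ℓ-1:ℤ):ℝ) * (((ℓ-1-1:ℤ):ℝ) * (z 1) ^ (ℓ-1-1-1)) * γ s))
             + (z 3) * 0) := by
      funext s
      simp [Hfun, Function.update_apply]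
    rw [key]
    have tA := (hγ1 (z 0)).const_mul ((z 1) ^ (ℓ-1))
    have tB := (hasDerivAt_id (z 0)).mul ((hγ2 (z 0)).const_mul ((z 1) ^ (ℓ-1)))
    have tC := ((hγ1 (z 0)).const_mul (((ℓ-1:ℤ):ℝ) * (z 1) ^ (ℓ-1-1))).add
      ((hasDerivAt_id (z 0)).mul ((hγ2 (z 0)).const_mul (((ℓ-1:ℤ):ℝ) * (z 1) ^ (ℓ-1-1))))
    have tD := tC.const_mul (z 1)
    have tE := ((hasDerivAt_id (z 0)).mul
      ((hγ1 (z 0)).const_mul (((ℓ-1:ℤ):ℝ) * (((ℓ-1-1:ℤ):ℝ) * (z 1) ^ (ℓ-1-1-1))))).const_mul (z 2)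
    have tF := hasDerivAt_const (z 0) ((z 3) * (0:ℝ))
    have t := (tA.add tB).sub ((tD.add tE).add tF)
    simp only [id_eq] at t; exact t.deriv.trans (by ring)
  have pd1H : pd 1 (Hfun γ ℓ) z
      = (((ℓ-1:ℤ):ℝ) * (z 1) ^ (ℓ-1-1) * γ (z 0) + (z 0) * (((ℓ-1:ℤ):ℝ) * (z 1) ^ (ℓ-1-1) * deriv γ (z 0)))
        - ((((ℓ-1:ℤ):ℝ) * (z 1) ^ (ℓ-1-1) * γ (z 0) + (z 0) * (((ℓ-1:ℤ):ℝ) * (z 1) ^ (ℓ-1-1) * deriv γ (z 0)))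
           + (z 1) * (((ℓ-1:ℤ):ℝ) * (((ℓ-1-1:ℤ):ℝ) * (z 1) ^ (ℓ-1-1-1)) * γ (z 0)
               + (z 0) * (((ℓ-1:ℤ):ℝ) * (((ℓ-1-1:ℤ):ℝ) * (z 1) ^ (ℓ-1-1-1)) * deriv γ (z 0)))
           + (z 2) * ((z 0) * (((ℓ-1:ℤ):ℝ) * (((ℓ-1-1:ℤ):ℝ)
               * (((ℓ-1-1-1:ℤ):ℝ) * (z 1) ^ (ℓ-1-1-1-1))) * γ (z 0)))) := by
    unfold pd
    have key : (fun s => Hfun γ ℓ (Function.update z 1 s))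
        = fun s =>
          (s ^ (ℓ-1) * γ (z 0) + (z 0) * (s ^ (ℓ-1) * deriv γ (z 0)))
          - (s * (((ℓ-1:ℤ):ℝ) * s ^ (ℓ-1-1) * γ (z 0)
                + (z 0) * (((ℓ-1:ℤ):ℝ) * s ^ (ℓ-1-1) * deriv γ (z 0)))
             + (z 2) * ((z 0) * (((ℓ-1:ℤ):ℝ) * (((ℓ-1-1:ℤ):ℝ) * s ^ (ℓ-1-1-1)) * γ (z 0)))
             + (z 3) * 0) := by
      funext s
      simp [Hfun, Function.update_apply]
    rw [key]
    have hz1 := hasDerivAt_zpow (ℓ-1) (z 1) (Or.inl hb)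
    have hz2 := hasDerivAt_zpow (ℓ-1-1) (z 1) (Or.inl hb)
    have hz3 := hasDerivAt_zpow (ℓ-1-1-1) (z 1) (Or.inl hb)
    have tA := (hz1.mul_const (γ (z 0))).add ((hz1.mul_const (deriv γ (z 0))).const_mul (z 0))
    have tC := ((hz2.const_mul (((ℓ-1:ℤ):ℝ))).mul_const (γ (z 0))).add
      (((hz2.const_mul (((ℓ-1:ℤ):ℝ))).mul_const (deriv γ (z 0))).const_mul (z 0))
    have tB := (hasDerivAt_id (z 1)).mul tC
    have tD := (((hz3.const_mul (((ℓ-1-1:ℤ):ℝ))).const_mul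
      (((ℓ-1:ℤ):ℝ))).mul_const (γ (z 0))).const_mul (z 0) |>.const_mul (z 2)
    have tE := hasDerivAt_const (z 1) ((z 3) * (0:ℝ))
    have t := tA.sub ((tB.add tD).add tE)
    simp only [id_eq, Pi.add_apply] at t; exact t.deriv.trans (by push_cast; ring)
  have pd2H : pd 2 (Hfun γ ℓ) z
      = -((z 0) * (((ℓ-1:ℤ):ℝ) * (((ℓ-1-1:ℤ):ℝ) * (z 1) ^ (ℓ-1-1-1)) * γ (z 0))) := by
    unfold pd
    have key : (fun s => Hfun γ ℓ (Function.update z 2 s))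
        = fun s =>
          ((z 1) ^ (ℓ-1) * γ (z 0) + (z 0) * ((z 1) ^ (ℓ-1) * deriv γ (z 0)))
          - ((z 1) * (((ℓ-1:ℤ):ℝ) * (z 1) ^ (ℓ-1-1) * γ (z 0)
                + (z 0) * (((ℓ-1:ℤ):ℝ) * (z 1) ^ (ℓ-1-1) * deriv γ (z 0)))
             + s * ((z 0) * (((ℓ-1:ℤ):ℝ) * (((ℓ-1-1:ℤ):ℝ) * (z 1) ^ (ℓ-1-1-1)) * γ (z 0)))
             + (z 3) * 0) := by
      funext s
      simp [Hfun, Function.update_apply]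
    rw [key]
    have t1 := (hasDerivAt_id (z 2)).mul_const
      ((z 0) * (((ℓ-1:ℤ):ℝ) * (((ℓ-1-1:ℤ):ℝ) * (z 1) ^ (ℓ-1-1-1)) * γ (z 0)))
    have t := ((t1.const_add ((z 1) * (((ℓ-1:ℤ):ℝ) * (z 1) ^ (ℓ-1-1) * γ (z 0)
        + (z 0) * (((ℓ-1:ℤ):ℝ) * (z 1) ^ (ℓ-1-1) * deriv γ (z 0))))).add_const ((z 3) * 0)).const_sub
      ((z 1) ^ (ℓ-1) * γ (z 0) + (z 0) * ((z 1) ^ (ℓ-1) * deriv γ (z 0)))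
    simp only [id_eq] at t; exact t.deriv.trans (by ring)
  -- pd of Rfun at z
  have pd0R : pd 0 (Rfun γ ℓ) z
      = (((ℓ:ℝ)-1) * (z 2) * (z 1) ^ (ℓ-3) * γ (z 0) + ((ℓ:ℝ)-1) * (z 2) * (z 1) ^ (ℓ-3) * (z 0) * deriv γ (z 0))
        + (z 1) ^ (ℓ-1) * ((deriv γ (z 0) + (z 0) * deriv (deriv γ) (z 0)) + (1/2) * deriv γ (z 0)) := by
    unfold pd
    have key : (fun s => Rfun γ ℓ (Function.update z 0 s))
        = fun s => ((ℓ:ℝ)-1) * (z 2) * (z 1) ^ (ℓ-3) * s * γ s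
            + (z 1) ^ (ℓ-1) * (s * deriv γ s + (1/2) * γ s) := by
      funext s
      simp [Rfun, Function.update_apply]
    rw [key]
    have t1 := (((hasDerivAt_id (z 0)).const_mul (((ℓ:ℝ)-1) * (z 2) * (z 1) ^ (ℓ-3)))).mul (hγ1 (z 0))
    have t2 := (((hasDerivAt_id (z 0)).mul (hγ2 (z 0))).add ((hγ1 (z 0)).const_mul (1/2))).const_mul
      ((z 1) ^ (ℓ-1))
    have t := t1.add t2
    simp only [id_eq] at t; exact t.deriv.trans (by ring)
  have pd1R : pd 1 (Rfun γ ℓ) z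
      = ((ℓ:ℝ)-1) * (z 2) * (((ℓ-3:ℤ):ℝ) * (z 1) ^ (ℓ-3-1)) * (z 0) * γ (z 0)
        + ((ℓ-1:ℤ):ℝ) * (z 1) ^ (ℓ-1-1) * ((z 0) * deriv γ (z 0) + (1/2) * γ (z 0)) := by
    unfold pd
    have key : (fun s => Rfun γ ℓ (Function.update z 1 s))
        = fun s => ((ℓ:ℝ)-1) * (z 2) * s ^ (ℓ-3) * (z 0) * γ (z 0)
            + s ^ (ℓ-1) * ((z 0) * deriv γ (z 0) + (1/2) * γ (z 0)) := by
      funext s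
      simp [Rfun, Function.update_apply]
    rw [key]
    have hz1 := hasDerivAt_zpow (ℓ-3) (z 1) (Or.inl hb)
    have hz2 := hasDerivAt_zpow (ℓ-1) (z 1) (Or.inl hb)
    have t1 := ((hz1.const_mul (((ℓ:ℝ)-1) * (z 2))).mul_const (z 0)).mul_const (γ (z 0))
    have t2 := hz2.mul_const ((z 0) * deriv γ (z 0) + (1/2) * γ (z 0))
    have t := t1.add t2
    exact t.deriv.trans (by push_cast; ring)
  have pd2R : pd 2 (Rfun γ ℓ) z = ((ℓ:ℝ)-1) * (z 1) ^ (ℓ-3) * (z 0) * γ (z 0) := by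
    unfold pd
    have key : (fun s => Rfun γ ℓ (Function.update z 2 s))
        = fun s => ((ℓ:ℝ)-1) * s * (z 1) ^ (ℓ-3) * (z 0) * γ (z 0)
            + (z 1) ^ (ℓ-1) * ((z 0) * deriv γ (z 0) + (1/2) * γ (z 0)) := by
      funext s
      simp [Rfun, Function.update_apply]
    rw [key]
    have t := (((((hasDerivAt_id (z 2)).const_mul ((ℓ:ℝ)-1)).mul_const
      ((z 1) ^ (ℓ-3))).mul_const (z 0)).mul_const (γ (z 0))).add_const
      ((z 1) ^ (ℓ-1) * ((z 0) * deriv γ (z 0) + (1/2) * γ (z 0)))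
    simp only [id_eq] at t; exact t.deriv.trans (by ring)
  -- assemble
  rw [VDF γ ℓ hγ1]
  rw [TD_of _ _ (fun j hj => by rw [pdH_hi γ ℓ j hj])]
  rw [TD_of _ _ (fun j hj => by rw [pdR_hi γ ℓ j hj])]
  rw [VD_of _ (fun k hk => pdG_hi γ ℓ k hk) z, pd1G,
    TD_of _ _ (fun j hj => by rw [pdK_hi γ ℓ j (by omega)]),
    pd0G γ ℓ hγ1, pd0K γ ℓ hγ1, pd1K, pdK_hi γ ℓ 2 le_rfl]
  rw [pd0H, pd1H, pd2H, pd0R, pd1R, pd2R]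
  -- normalize exponents and powers of (z 1)
  simp only [show (ℓ-1-1:ℤ) = ℓ-2 from by ring, show (ℓ-2-1:ℤ) = ℓ-3 from by ring,
    show (ℓ-3-1:ℤ) = ℓ-4 from by ring]
  have h1 : (z 1) ^ (ℓ-1) = (z 1) ^ (ℓ-4) * (z 1) ^ (3:ℕ) := by
    rw [show (ℓ-1:ℤ) = ℓ-4+(3:ℕ) by push_cast; ring, zpow_add₀ hb, zpow_natCast]
  have h2 : (z 1) ^ (ℓ-2) = (z 1) ^ (ℓ-4) * (z 1) ^ (2:ℕ) := by
    rw [show (ℓ-2:ℤ) = ℓ-4+(2:ℕ) by push_cast; ring, zpow_add₀ hb, zpow_natCast]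
  have h3 : (z 1) ^ (ℓ-3) = (z 1) ^ (ℓ-4) * (z 1) ^ (1:ℕ) := by
    rw [show (ℓ-3:ℤ) = ℓ-4+(1:ℕ) by push_cast; ring, zpow_add₀ hb, zpow_natCast]
  rw [h1, h2, h3]
  push_cast
  generalize z 1 ^ (ℓ - 4) = B
  ring
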